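/- Let K be a compact Hausdorff space, φ : K → K a continuous surjection, w ∈ C(K) with |w| > 0 on K, and T = w·T_φ the weighted composition operator. If λ is in the approximate point spectrum of T then |λ| ≥ ρ_min(T) := min over all φ-invariant regular Borel probability measures μ of exp(∫ log|w| dμ). Consequently, for |λ| < ρ_min(T), the operator λI − T is bounded below (injective with closed range). -/

import Mathlib

open MeasureTheory Filter Topology
open scoped ENNReal NNReal

namespace Stmt7Aux

lemma clamp_all_one {y : ℝ} {N : ℕ} (h : (N:ℝ) < y) :
    ∑ i ∈ Finset.range N, min 1 (max 0 (y - i)) = N := by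
  rw [Finset.sum_congr rfl (fun i hi => ?_), Finset.sum_const, Finset.card_range,
    nsmul_eq_mul, mul_one]
  have hi' : (i:ℝ) + 1 ≤ N := by exact_mod_cast Finset.mem_range.1 hi
  have h1 : (1:ℝ) ≤ y - i := by linarith
  exact min_eq_left (h1.trans (le_max_right 0 _))

lemma clamp_sum_le {y : ℝ} (hy : 0 ≤ y) (N : ℕ) :
    ∑ i ∈ Finset.range N, min 1 (max 0 (y - i)) ≤ y := by
  induction N with
  | zero => simpa
  | succ N ih =>
    rw [Finset.sum_range_succ]
    rcases le_or_gt y N with h | h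
    · have h0 : max 0 (y - N) = 0 := max_eq_left (by linarith)
      rw [h0]; simpa using ih
    · rw [clamp_all_one h]
      have : min 1 (max 0 (y - N)) ≤ y - N := by
        rw [max_eq_right (by linarith)]; exact min_le_right _ _
      linarith

lemma le_clamp_sum {y : ℝ} (hy : 0 ≤ y) {N : ℕ} (hN : y ≤ N) :
    y ≤ ∑ i ∈ Finset.range N, min 1 (max 0 (y - i)) := by
  induction N with
  | zero =>
    have : y = 0 := le_antisymm (by exact_mod_cast hN) hy
    simp [this]
  | succ N ih =>
    rw [Finset.sum_range_succ]
    rcases le_or_gt y N with h | h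
    · have h0 : (0:ℝ) ≤ min 1 (max 0 (y - N)) := le_min (by norm_num) (le_max_left _ _) |>.trans (le_of_eq rfl)
      have := ih h
      have hmin : (0:ℝ) ≤ min 1 (max 0 (y - N)) := le_min zero_le_one (le_max_left _ _)
      linarith
    · rw [clamp_all_one h]
      have h1 : y - N ≤ 1 := by
        have : (y:ℝ) ≤ N + 1 := by exact_mod_cast hN
        linarith
      have : min 1 (max 0 (y - N)) = y - N := by
        rw [max_eq_right (by linarith), min_eq_right h1]
      linarith

lemma indsum_le {y : ℝ} (hy : 0 ≤ y) (N : ℕ) :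
    ∑ i ∈ Finset.range N, (if ((i:ℝ) + 1) ≤ y then (1:ℝ) else 0) ≤ y := by
  induction N with
  | zero => simpa
  | succ N ih =>
    rcases le_or_gt ((N:ℝ) + 1) y with h | h
    · rw [Finset.sum_congr rfl (fun i hi => if_pos ?_), Finset.sum_const, Finset.card_range,
        nsmul_eq_mul, mul_one]
      · exact_mod_cast h
      · have : (i:ℝ) + 1 ≤ N + 1 := by
          have := Finset.mem_range.1 hi
          have : (i:ℝ) ≤ N := by exact_mod_cast Nat.lt_succ_iff.1 this
          linarith
        linarith
    · rw [Finset.sum_range_succ, if_neg (not_le.mpr h)]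
      simpa using ih

lemma le_indsum {y : ℝ} {N : ℕ} (hN : y ≤ N) :
    y ≤ ∑ i ∈ Finset.range N, (if (i:ℝ) ≤ y then (1:ℝ) else 0) := by
  induction N with
  | zero => simpa using hN
  | succ N ih =>
    rcases le_or_gt y N with h | h
    · have hlast : (0:ℝ) ≤ (if ((N:ℝ)) ≤ y then (1:ℝ) else 0) := by positivity
      rw [Finset.sum_range_succ]
      have := ih h
      linarith
    · rw [Finset.sum_congr rfl (fun i hi => if_pos ?_), Finset.sum_const, Finset.card_range,
        nsmul_eq_mul, mul_one]
      · exact_mod_cast hN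
      · have : (i:ℝ) ≤ N := by exact_mod_cast Nat.lt_succ_iff.1 (Finset.mem_range.1 hi)
        linarith


section RMK

variable {K : Type*} [TopologicalSpace K] [CompactSpace K] [T2Space K]

/-- admissible functions for a set `C` -/
def Adm (C : Set K) (f : C(K, ℝ)) : Prop := (∀ x, 0 ≤ f x) ∧ ∀ x ∈ C, 1 ≤ f x

variable (L : C(K, ℝ) →ₗ[ℝ] ℝ)

def SC (C : Set K) : Set ℝ := {r | ∃ f : C(K, ℝ), Adm C f ∧ r = L f}

noncomputable def cR (C : Set K) : ℝ := sInf (SC L C)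

variable {L}
variable (hpos : ∀ f : C(K, ℝ), (∀ x, 0 ≤ f x) → 0 ≤ L f)

lemma adm_one (C : Set K) : Adm C (1 : C(K, ℝ)) :=
  ⟨fun _ => zero_le_one, fun _ _ => le_rfl⟩

lemma SC_nonempty (C : Set K) : (SC L C).Nonempty := ⟨L 1, 1, adm_one C, rfl⟩

include hpos in
lemma SC_bddBelow (C : Set K) : BddBelow (SC L C) := by
  refine ⟨0, ?_⟩
  rintro r ⟨f, hf, rfl⟩
  exact hpos f hf.1

include hpos in
lemma Lmono {f g : C(K, ℝ)} (h : ∀ x, f x ≤ g x) : L f ≤ L g := by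
  have h0 : 0 ≤ L (g - f) := hpos _ (fun x => by simpa using sub_nonneg.2 (h x))
  rw [map_sub] at h0; linarith

include hpos in
lemma cR_nonneg (C : Set K) : 0 ≤ cR L C :=
  le_csInf (SC_nonempty C) (by rintro r ⟨f, hf, rfl⟩; exact hpos f hf.1)

include hpos in
lemma cR_le {C : Set K} {f : C(K, ℝ)} (hf : Adm C f) : cR L C ≤ L f :=
  csInf_le (SC_bddBelow hpos C) ⟨f, hf, rfl⟩

lemma le_cR {C : Set K} {b : ℝ} (h : ∀ f : C(K, ℝ), Adm C f → b ≤ L f) : b ≤ cR L C :=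
  le_csInf (SC_nonempty C) (by rintro r ⟨f, hf, rfl⟩; exact h f hf)

include hpos in
lemma cR_mono {C D : Set K} (h : C ⊆ D) : cR L C ≤ cR L D :=
  csInf_le_csInf (SC_bddBelow hpos C) (SC_nonempty D)
    (by rintro r ⟨f, hf, rfl⟩; exact ⟨f, ⟨hf.1, fun x hx => hf.2 x (h hx)⟩, rfl⟩)

variable (hone : L 1 = 1)

include hpos hone in
lemma cR_le_one (C : Set K) : cR L C ≤ 1 := by
  have := cR_le hpos (adm_one C)
  rwa [hone] at this

lemma exists_adm_lt (C : Set K) {ε : ℝ} (hε : 0 < ε) :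
    ∃ f : C(K, ℝ), Adm C f ∧ L f < cR L C + ε := by
  obtain ⟨r, hr, hlt⟩ := exists_lt_of_csInf_lt (SC_nonempty C) (lt_add_of_pos_right (cR L C) hε)
  obtain ⟨f, hf, rfl⟩ := hr
  exact ⟨f, hf, hlt⟩

include hpos in
lemma cR_union_le (C D : Set K) : cR L (C ∪ D) ≤ cR L C + cR L D := by
  refine le_of_forall_pos_le_add (fun ε hε => ?_)
  obtain ⟨f, hf, hfl⟩ := exists_adm_lt (L := L) C (half_pos hε)
  obtain ⟨g, hg, hgl⟩ := exists_adm_lt (L := L) D (half_pos hε)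
  have hadm : Adm (C ∪ D) (f + g) := by
    constructor
    · intro x; have := hf.1 x; have := hg.1 x; simp only [ContinuousMap.add_apply]; linarith
    · rintro x (hx | hx) <;> simp only [ContinuousMap.add_apply]
      · have := hf.2 x hx; have := hg.1 x; linarith
      · have := hg.2 x hx; have := hf.1 x; linarith
  have := cR_le hpos hadm
  rw [map_add] at this
  linarith

include hpos in
lemma add_cR_le {C D : Set K} (hC : IsCompact C) (hD : IsCompact D) (hdisj : Disjoint C D) :
    cR L C + cR L D ≤ cR L (C ∪ D) := by
  obtain ⟨g, hg0, hg1, hg01⟩ := exists_continuous_zero_one_of_isCompact hC hD.isClosed hdisj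
  refine le_cR (fun f hf => ?_)
  have h1 : Adm C (f * (1 - g)) := by
    constructor
    · intro x
      have := hf.1 x; have := (hg01 x).2
      simp only [ContinuousMap.mul_apply, ContinuousMap.sub_apply, ContinuousMap.one_apply]
      nlinarith
    · intro x hx
      have hfx := hf.2 x (Set.mem_union_left _ hx)
      have : g x = 0 := hg0 hx
      simp only [ContinuousMap.mul_apply, ContinuousMap.sub_apply, ContinuousMap.one_apply, this]
      linarith
  have h2 : Adm D (f * g) := by
    constructor
    · intro x
      have := hf.1 x; have := (hg01 x).1
      simp only [ContinuousMap.mul_apply]; nlinarith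
    · intro x hx
      have hfx := hf.2 x (Set.mem_union_right _ hx)
      have : g x = 1 := hg1 hx
      simp only [ContinuousMap.mul_apply, this]; linarith
  have key : f * (1 - g) + f * g = f := by ext x; simp; ring
  have := add_le_add (cR_le hpos h1) (cR_le hpos h2)
  rwa [← map_add, key] at this

include hpos in
/-- the Riesz content associated to a positive normalized functional -/
noncomputable def rieszCont : Content K where
  toFun C := ⟨cR L C, cR_nonneg hpos C⟩
  mono' C D h := by exact NNReal.coe_le_coe.1 (cR_mono hpos h)
  sup_disjoint' C D hdisj _ _ := by
    have h1 := add_cR_le hpos C.isCompact D.isCompact hdisj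
    have h2 := cR_union_le (L := L) hpos (C : Set K) D
    have : cR L ((C ⊔ D : TopologicalSpace.Compacts K) : Set K) = cR L C + cR L D := by
      rw [TopologicalSpace.Compacts.coe_sup]
      exact le_antisymm h2 h1
    ext1
    exact this
  sup_le' C D := by
    have h2 := cR_union_le (L := L) hpos (C : Set K) D
    refine NNReal.coe_le_coe.1 ?_
    show cR L ((C ⊔ D : TopologicalSpace.Compacts K) : Set K) ≤ cR L C + cR L D
    simpa [TopologicalSpace.Compacts.coe_sup] using h2

include hone in
lemma rieszCont_regular : (rieszCont (L := L) hpos).ContentRegular := by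
  intro C
  refine le_antisymm (le_iInf₂ fun C' hC' => ?_) ?_
  · exact ENNReal.coe_le_coe.2 (by
      exact NNReal.coe_le_coe.1 (cR_mono hpos (hC'.trans interior_subset)))
  · refine ENNReal.le_of_forall_pos_le_add (fun ε hε _ => ?_)
    set ε' : ℝ := min (ε : ℝ) 1 with hε'def
    have hε'pos : 0 < ε' := lt_min (by exact_mod_cast hε) one_pos
    have hε'le : ε' ≤ 1 := min_le_right _ _
    set δ : ℝ := ε' / 4 with hδdef
    have hδpos : 0 < δ := by positivity
    obtain ⟨f, hf, hfl⟩ := exists_adm_lt (L := L) (C : Set K) hδpos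
    have hδlt : δ < 1 := by simp only [hδdef]; linarith
    set C' : TopologicalSpace.Compacts K :=
      ⟨{x | 1 - δ ≤ f x}, (isClosed_le (by continuity) f.continuous).isCompact⟩ with hC'def
    have hsub : (C : Set K) ⊆ interior (C' : Set K) := by
      have hopen : IsOpen {x | 1 - δ < f x} := isOpen_lt (by continuity) f.continuous
      have h1 : (C : Set K) ⊆ {x | 1 - δ < f x} := fun x hx => by
        have := hf.2 x hx; simp only [Set.mem_setOf_eq]; linarith
      exact h1.trans (hopen.subset_interior_iff.2
        (fun x hx => show (1:ℝ) - δ ≤ f x from le_of_lt hx))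
    have hC'le : cR L (C' : Set K) ≤ (1 - δ)⁻¹ * L f := by
      have h0 : (0:ℝ) < 1 - δ := by linarith
      have hadm : Adm (C' : Set K) ((1 - δ)⁻¹ • f) := by
        constructor
        · intro x
          simp only [ContinuousMap.smul_apply, smul_eq_mul]
          exact mul_nonneg (inv_nonneg.2 h0.le) (hf.1 x)
        · intro x hx
          have hx' : 1 - δ ≤ f x := hx
          simp only [ContinuousMap.smul_apply, smul_eq_mul]
          rw [le_inv_mul_iff₀ h0, mul_one]
          exact hx'
      have := cR_le hpos hadm
      rwa [L.map_smul, smul_eq_mul] at this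
    have hcle : cR L (C' : Set K) ≤ cR L C + ε' := by
      have h0 : (0:ℝ) < 1 - δ := by linarith
      have hc1 : cR L (C : Set K) ≤ 1 := cR_le_one hpos hone _
      have hc0 : 0 ≤ cR L (C : Set K) := cR_nonneg hpos _
      refine hC'le.trans ?_
      rw [inv_mul_le_iff₀ h0]
      nlinarith
    refine (iInf_le_of_le C' (iInf_le_of_le hsub ?_))
    have hfinal : ((rieszCont (L := L) hpos).toFun C' : ℝ) ≤
        ((rieszCont (L := L) hpos).toFun C : ℝ) + (ε : ℝ) := by
      show cR L (C' : Set K) ≤ cR L (C : Set K) + (ε : ℝ)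
      exact hcle.trans (by have := min_le_left (ε : ℝ) 1; linarith)
    show ((rieszCont (L := L) hpos).toFun C' : ℝ≥0∞) ≤
      ((rieszCont (L := L) hpos).toFun C : ℝ≥0∞) + (ε : ℝ≥0∞)
    rw [← ENNReal.coe_add, ENNReal.coe_le_coe, ← NNReal.coe_le_coe, NNReal.coe_add]
    exact hfinal

variable [MeasurableSpace K] [BorelSpace K]

noncomputable def rieszMeasure : Measure K := (rieszCont (L := L) hpos).measure

include hone in
lemma rieszMeasure_compact {C : Set K} (hC : IsCompact C) :
    ((rieszMeasure (L := L) hpos) C).toReal = cR L C := by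
  have := Content.measure_eq_content_of_regular (rieszCont (L := L) hpos)
    (rieszCont_regular hpos hone) ⟨C, hC⟩
  simp only [TopologicalSpace.Compacts.coe_mk] at this
  rw [rieszMeasure, this]
  rfl

include hone in
lemma rieszMeasure_prob : IsProbabilityMeasure (rieszMeasure (L := L) hpos) := by
  constructor
  have huniv := Content.measure_eq_content_of_regular (rieszCont (L := L) hpos)
    (rieszCont_regular hpos hone) ⟨Set.univ, isCompact_univ⟩
  simp only [TopologicalSpace.Compacts.coe_mk] at huniv
  rw [rieszMeasure, huniv]
  have h1 : cR L (Set.univ : Set K) = 1 := by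
    refine le_antisymm (cR_le_one hpos hone _) (le_cR fun f hf => ?_)
    have : L 1 ≤ L f := Lmono hpos (fun x => hf.2 x (Set.mem_univ x))
    rwa [hone] at this
  have h2 : ((rieszCont (L := L) hpos).toFun ⟨Set.univ, isCompact_univ⟩ : NNReal) = 1 := by
    ext
    exact h1
  show (((rieszCont (L := L) hpos).toFun ⟨Set.univ, isCompact_univ⟩ : NNReal) : ℝ≥0∞) = 1
  rw [h2]
  simp

lemma rieszMeasure_regular : (rieszMeasure (L := L) hpos).Regular := by
  rw [rieszMeasure]; infer_instance

include hone in
theorem integral_rieszMeasure (f : C(K, ℝ)) :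
    ∫ x, f x ∂(rieszMeasure (L := L) hpos) = L f := by
  set μ := rieszMeasure (L := L) hpos with hμdef
  haveI : IsProbabilityMeasure μ := rieszMeasure_prob hpos hone
  have hint : ∀ h : C(K, ℝ), Integrable h μ := fun h =>
    h.continuous.integrable_of_hasCompactSupport (HasCompactSupport.of_compactSpace _)
  -- main step : normalized case
  have key : ∀ f : C(K, ℝ), (∀ x, 0 ≤ f x ∧ f x ≤ 1) → ∫ x, f x ∂μ = L f := by
    intro f hf01
    have main : ∀ N : ℕ, 1 ≤ N → |(N:ℝ) * (∫ x, f x ∂μ) - N * L f| ≤ 1 := by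
      intro N hN
      have hNpos : (0:ℝ) < N := by exact_mod_cast hN
      set E : ℕ → Set K := fun i => {x | (i:ℝ)/N ≤ f x} with hEdef
      have hEclosed : ∀ i, IsClosed (E i) := fun i => isClosed_le continuous_const f.continuous
      have hEcompact : ∀ i, IsCompact (E i) := fun i => (hEclosed i).isCompact
      have hEmeas : ∀ i, MeasurableSet (E i) := fun i => (hEclosed i).measurableSet
      have hμE : ∀ i, (μ (E i)).toReal = cR L (E i) := fun i =>
        rieszMeasure_compact hpos hone (hEcompact i)
      have hcR0 : ∀ i, 0 ≤ cR L (E i) := fun i => cR_nonneg hpos _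
      have hcR1 : ∀ i, cR L (E i) ≤ 1 := fun i => cR_le_one hpos hone _
      have hmemE : ∀ i x, x ∈ E i ↔ (i:ℝ) ≤ N * f x := by
        intro i x
        rw [hEdef]
        simp only [Set.mem_setOf_eq]
        rw [div_le_iff₀ hNpos, mul_comm]
      -- the bump functions
      set g : ℕ → C(K, ℝ) := fun i =>
        ⟨fun x => min 1 (max 0 ((N:ℝ) * f x - i)),
          continuous_const.min (continuous_const.max
            ((continuous_const.mul f.continuous).sub continuous_const))⟩ with hgdef
      have hg_apply : ∀ i x, g i x = min 1 (max 0 ((N:ℝ) * f x - i)) := fun i x => rfl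
      have hLg_le : ∀ i, L (g i) ≤ cR L (E i) := by
        intro i
        refine le_csInf (SC_nonempty _) ?_
        rintro r ⟨h, hh, rfl⟩
        refine Lmono hpos (fun x => ?_)
        rcases le_or_gt ((i:ℝ)) (N * f x) with hx | hx
        · exact (min_le_left _ _).trans (hh.2 x ((hmemE i x).2 hx))
        · rw [hg_apply, max_eq_left (by linarith), min_eq_right zero_le_one]
          exact hh.1 x
      have hcR_le_Lg : ∀ i, cR L (E (i+1)) ≤ L (g i) := by
        intro i
        refine cR_le hpos ⟨fun x => le_min zero_le_one (le_max_left _ _), fun x hx => ?_⟩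
        have hx' : ((i:ℝ)+1) ≤ N * f x := by
          have := (hmemE (i+1) x).1 hx
          push_cast at this
          linarith
        rw [hg_apply]
        exact le_min le_rfl (le_max_of_le_right (by linarith))
      have hsum_apply : ∀ x, (∑ i ∈ Finset.range N, g i) x
          = ∑ i ∈ Finset.range N, min 1 (max 0 ((N:ℝ) * f x - i)) := by
        intro x
        rw [ContinuousMap.sum_apply]
        exact Finset.sum_congr rfl (fun i _ => rfl)
      -- L bounds
      have hLf_upper : (N:ℝ) * L f ≤ ∑ i ∈ Finset.range N, cR L (E i) := by
        have h1 : (N:ℝ) * L f = L ((N:ℝ) • f) := by rw [L.map_smul, smul_eq_mul]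
        have h2 : L ((N:ℝ) • f) ≤ L (∑ i ∈ Finset.range N, g i) := by
          refine Lmono hpos (fun x => ?_)
          rw [hsum_apply]
          simp only [ContinuousMap.smul_apply, smul_eq_mul]
          refine le_clamp_sum (by nlinarith [(hf01 x).1]) ?_
          nlinarith [(hf01 x).2]
        have h3 : L (∑ i ∈ Finset.range N, g i) = ∑ i ∈ Finset.range N, L (g i) :=
          map_sum L _ _
        calc (N:ℝ) * L f ≤ ∑ i ∈ Finset.range N, L (g i) := by rw [← h3, ← h1] at *; linarith [h2]
          _ ≤ _ := Finset.sum_le_sum (fun i _ => hLg_le i)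
      have hLf_lower : ∑ i ∈ Finset.range N, cR L (E (i+1)) ≤ (N:ℝ) * L f := by
        have h2 : L (∑ i ∈ Finset.range N, g i) ≤ L ((N:ℝ) • f) := by
          refine Lmono hpos (fun x => ?_)
          rw [hsum_apply]
          simp only [ContinuousMap.smul_apply, smul_eq_mul]
          exact clamp_sum_le (by nlinarith [(hf01 x).1]) N
        have h3 : L (∑ i ∈ Finset.range N, g i) = ∑ i ∈ Finset.range N, L (g i) :=
          map_sum L _ _
        have h1 : L ((N:ℝ) • f) = (N:ℝ) * L f := by rw [L.map_smul, smul_eq_mul]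
        calc ∑ i ∈ Finset.range N, cR L (E (i+1))
            ≤ ∑ i ∈ Finset.range N, L (g i) := Finset.sum_le_sum (fun i _ => hcR_le_Lg i)
          _ ≤ (N:ℝ) * L f := by rw [← h3]; rw [h1] at h2; exact h2
      -- integral bounds
      have hind_int : ∀ i, Integrable ((E i).indicator (fun _ => (1:ℝ))) μ := fun i =>
        (integrable_indicator_iff (hEmeas i)).2
          (integrableOn_const (measure_ne_top μ _))
      have hind_val : ∀ i, ∫ x, (E i).indicator (fun _ => (1:ℝ)) x ∂μ = (μ (E i)).toReal := by
        intro i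
        rw [integral_indicator_const (1:ℝ) (hEmeas i), smul_eq_mul, mul_one, measureReal_def]
      have hInt_upper : (N:ℝ) * (∫ x, f x ∂μ)
          ≤ ∑ i ∈ Finset.range N, (μ (E i)).toReal := by
        have hp : ∀ x, (N:ℝ) * f x ≤ ∑ i ∈ Finset.range N,
            (E i).indicator (fun _ => (1:ℝ)) x := by
          intro x
          have := le_indsum (y := (N:ℝ) * f x) (N := N) (by nlinarith [(hf01 x).2])
          refine this.trans (le_of_eq (Finset.sum_congr rfl (fun i _ => ?_)))
          rw [Set.indicator_apply, if_congr ((hmemE i x).symm) rfl rfl]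
        calc (N:ℝ) * (∫ x, f x ∂μ) = ∫ x, (N:ℝ) * f x ∂μ := (integral_const_mul _ _).symm
          _ ≤ ∫ x, (∑ i ∈ Finset.range N, (E i).indicator (fun _ => (1:ℝ)) x) ∂μ := by
              refine integral_mono ((hint f).const_mul _) ?_ hp
              exact integrable_finset_sum _ (fun i _ => hind_int i)
          _ = ∑ i ∈ Finset.range N, (μ (E i)).toReal := by
              rw [integral_finset_sum _ (fun i _ => hind_int i)]
              exact Finset.sum_congr rfl (fun i _ => hind_val i)
      have hInt_lower : ∑ i ∈ Finset.range N, (μ (E (i+1))).toReal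
          ≤ (N:ℝ) * (∫ x, f x ∂μ) := by
        have hp : ∀ x, (∑ i ∈ Finset.range N,
            (E (i+1)).indicator (fun _ => (1:ℝ)) x) ≤ (N:ℝ) * f x := by
          intro x
          refine le_trans (le_of_eq (Finset.sum_congr rfl (fun i _ => ?_)))
            (indsum_le (y := (N:ℝ) * f x) (by nlinarith [(hf01 x).1]) N)
          rw [Set.indicator_apply]
          refine if_congr ?_ rfl rfl
          rw [hmemE (i+1) x]
          push_cast
          rfl
        calc ∑ i ∈ Finset.range N, (μ (E (i+1))).toReal
            = ∫ x, (∑ i ∈ Finset.range N, (E (i+1)).indicator (fun _ => (1:ℝ)) x) ∂μ := by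
              rw [integral_finset_sum _ (fun i _ => hind_int (i+1))]
              exact (Finset.sum_congr rfl (fun i _ => hind_val (i+1))).symm
          _ ≤ ∫ x, (N:ℝ) * f x ∂μ := by
              refine integral_mono ?_ ((hint f).const_mul _) hp
              exact integrable_finset_sum _ (fun i _ => hind_int (i+1))
          _ = (N:ℝ) * (∫ x, f x ∂μ) := integral_const_mul _ _
      -- telescoping
      obtain ⟨M, rfl⟩ : ∃ M, N = M + 1 := ⟨N - 1, by omega⟩
      have htel : ∑ i ∈ Finset.range (M+1), cR L (E i)
          ≤ ∑ i ∈ Finset.range (M+1), cR L (E (i+1)) + 1 := by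
        rw [Finset.sum_range_succ' (fun i => cR L (E i)) M,
          Finset.sum_range_succ (fun i => cR L (E (i+1))) M]
        have := hcR1 0
        have := hcR0 (M+1)
        linarith
      -- combine
      have hμcR : ∀ i, (μ (E i)).toReal = cR L (E i) := hμE
      rw [abs_le]
      constructor
      · -- N L f - N ∫ f ≤ 1  i.e.  -(1) ≤ N ∫ - N L
        have c1 : ((M+1:ℕ):ℝ) * L f ≤ ∑ i ∈ Finset.range (M+1), cR L (E i) := hLf_upper
        have c2 : ∑ i ∈ Finset.range (M+1), cR L (E i)
            ≤ ∑ i ∈ Finset.range (M+1), cR L (E (i+1)) + 1 := htel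
        have c3 : ∑ i ∈ Finset.range (M+1), cR L (E (i+1))
            ≤ ((M+1:ℕ):ℝ) * (∫ x, f x ∂μ) := by
          calc ∑ i ∈ Finset.range (M+1), cR L (E (i+1))
              = ∑ i ∈ Finset.range (M+1), (μ (E (i+1))).toReal :=
                (Finset.sum_congr rfl (fun i _ => (hμE (i+1)).symm))
            _ ≤ _ := hInt_lower
        linarith
      · -- N ∫ - N L ≤ 1
        have c1 : ((M+1:ℕ):ℝ) * (∫ x, f x ∂μ) ≤ ∑ i ∈ Finset.range (M+1), cR L (E i) := by
          refine hInt_upper.trans (le_of_eq (Finset.sum_congr rfl (fun i _ => hμE i)))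
        have c3 : ∑ i ∈ Finset.range (M+1), cR L (E (i+1)) ≤ ((M+1:ℕ):ℝ) * L f := hLf_lower
        linarith
    -- conclude equality
    by_contra hne
    have hd : 0 < |(∫ x, f x ∂μ) - L f| := abs_pos.2 (sub_ne_zero.2 hne)
    obtain ⟨N, hNgt⟩ := exists_nat_gt (1 / |(∫ x, f x ∂μ) - L f|)
    have hN1 : 1 ≤ N := by
      by_contra hN0
      push_neg at hN0
      interval_cases N
      simp only [Nat.cast_zero] at hNgt
      have : 0 < 1 / |(∫ x, f x ∂μ) - L f| := by positivity
      linarith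
    have := main N hN1
    have hNd : 1 < (N:ℝ) * |(∫ x, f x ∂μ) - L f| := by
      rw [div_lt_iff₀ hd] at hNgt
      linarith [hNgt]
    rw [← abs_of_nonneg (by positivity : (0:ℝ) ≤ (N:ℝ)), ← abs_mul, mul_sub] at hNd
    linarith
  -- general case
  have ha : (0:ℝ) ≤ ‖f‖ := norm_nonneg f
  set a : ℝ := ‖f‖ with hadef
  have hb : (0:ℝ) < 2*a + 1 := by linarith
  set h : C(K, ℝ) := (2*a+1)⁻¹ • (f + a • (1 : C(K, ℝ))) with hhdef
  have hfx : ∀ x, |f x| ≤ a := fun x => by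
    have := f.norm_coe_le_norm x
    rwa [Real.norm_eq_abs] at this
  have h01 : ∀ x, 0 ≤ h x ∧ h x ≤ 1 := by
    intro x
    have := hfx x
    rw [abs_le] at this
    constructor
    · simp only [hhdef, ContinuousMap.smul_apply, ContinuousMap.add_apply,
        ContinuousMap.one_apply, smul_eq_mul]
      have : 0 ≤ f x + a * 1 := by linarith [this.1]
      positivity
    · simp only [hhdef, ContinuousMap.smul_apply, ContinuousMap.add_apply,
        ContinuousMap.one_apply, smul_eq_mul]
      rw [inv_mul_le_iff₀ hb, mul_one]
      linarith [this.2]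
  have hrep : ∫ x, h x ∂μ = L h := key h h01
  have hLh : L h = (2*a+1)⁻¹ * (L f + a) := by
    rw [hhdef, L.map_smul, map_add, L.map_smul, hone, smul_eq_mul, smul_eq_mul, mul_one]
  have hIh : ∫ x, h x ∂μ = (2*a+1)⁻¹ * ((∫ x, f x ∂μ) + a) := by
    have : ∀ x, h x = (2*a+1)⁻¹ * (f x + a) := by
      intro x
      simp [hhdef, ContinuousMap.smul_apply, ContinuousMap.add_apply, smul_eq_mul]
      ring
    rw [integral_congr_ae (Filter.Eventually.of_forall this), integral_const_mul,
      integral_add (hint f) (integrable_const a), integral_const]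
    simp
  rw [hIh, hLh] at hrep
  have := mul_left_cancel₀ (inv_ne_zero hb.ne') hrep
  linarith

end RMK

section Uniq

variable {K : Type*} [TopologicalSpace K] [CompactSpace K] [T2Space K]
  [MeasurableSpace K] [BorelSpace K]

theorem map_eq_of_integral_eq (μ : Measure K) [IsProbabilityMeasure μ] (hreg : μ.Regular)
    (φ : K → K) (hφ : Continuous φ)
    (h : ∀ f : C(K, ℝ), ∫ x, f (φ x) ∂μ = ∫ x, f x ∂μ) : Measure.map φ μ = μ := by
  haveI := hreg
  set ν : Measure K := Measure.map φ μ with hνdef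
  haveI : IsProbabilityMeasure ν := Measure.isProbabilityMeasure_map hφ.measurable.aemeasurable
  have hν_apply : ∀ {A : Set K}, MeasurableSet A → ν A = μ (φ ⁻¹' A) := fun hA =>
    Measure.map_apply hφ.measurable hA
  have hcont_int : ∀ (m : Measure K) [IsFiniteMeasure m] (f : C(K, ℝ)), Integrable f m :=
    fun m _ f => f.continuous.integrable_of_hasCompactSupport (HasCompactSupport.of_compactSpace _)
  have step1 : ∀ C : Set K, IsCompact C → ν C ≤ μ C := by
    intro C hC
    refine ENNReal.le_of_forall_pos_le_add (fun ε hε hμC => ?_)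
    have hlt : μ C < μ C + ε := ENNReal.lt_add_right hμC.ne (by exact_mod_cast hε.ne')
    obtain ⟨U, hCU, hUopen, hU⟩ := Set.exists_isOpen_lt_of_lt C _ hlt
    obtain ⟨f, hf0, hf1, hf01⟩ := exists_continuous_zero_one_of_isCompact' hC
      hUopen.isClosed_compl (Set.disjoint_left.2 fun x hx hxc => hxc (hCU hx))
    have hCmeas : MeasurableSet C := hC.isClosed.measurableSet
    have hUmeas : MeasurableSet U := hUopen.measurableSet
    have hik : (ν C).toReal ≤ ∫ x, f x ∂ν := by
      have h1 : ∫ x, C.indicator (fun _ => (1:ℝ)) x ∂ν = (ν C).toReal := by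
        rw [integral_indicator_const (1:ℝ) hCmeas, smul_eq_mul, mul_one, measureReal_def]
      rw [← h1]
      refine integral_mono ((integrable_indicator_iff hCmeas).2
        (integrableOn_const (measure_ne_top ν _))) (hcont_int ν f) (fun x => ?_)
      by_cases hx : x ∈ C
      · rw [Set.indicator_of_mem hx, hf1 hx]
        simp
      · rw [Set.indicator_of_notMem hx]
        exact (hf01 x).1
    have hmap : ∫ x, f x ∂ν = ∫ x, f x ∂μ := by
      rw [hνdef, integral_map hφ.measurable.aemeasurable f.continuous.aestronglyMeasurable]
      exact h f
    have hfin : ∫ x, f x ∂μ ≤ (μ U).toReal := by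
      have h1 : ∫ x, U.indicator (fun _ => (1:ℝ)) x ∂μ = (μ U).toReal := by
        rw [integral_indicator_const (1:ℝ) hUmeas, smul_eq_mul, mul_one, measureReal_def]
      rw [← h1]
      refine integral_mono (hcont_int μ f) ((integrable_indicator_iff hUmeas).2
        (integrableOn_const (measure_ne_top μ _))) (fun x => ?_)
      by_cases hx : x ∈ U
      · rw [Set.indicator_of_mem hx]
        exact (hf01 x).2
      · rw [Set.indicator_of_notMem hx, hf0 hx]
        simp
    have : (ν C).toReal ≤ (μ U).toReal := by
      refine hik.trans ?_
      rw [hmap]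
      exact hfin
    have hνμ : ν C ≤ μ U :=
      (ENNReal.toReal_le_toReal (measure_ne_top ν C) (measure_ne_top μ U)).1 this
    exact hνμ.trans hU.le
  have step2 : ∀ A : Set K, MeasurableSet A → ν A ≤ μ A := by
    intro A hA
    refine le_of_forall_lt (fun r hr => ?_)
    rw [hν_apply hA] at hr
    obtain ⟨D, hDsub, hDcomp, hDlt⟩ :=
      MeasurableSet.exists_lt_isCompact_of_ne_top (hφ.measurable hA) (measure_ne_top μ _) hr
    have hDA : φ '' D ⊆ A := by rintro _ ⟨x, hx, rfl⟩; exact hDsub hx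
    calc r < μ D := hDlt
      _ ≤ μ (φ ⁻¹' (φ '' D)) := measure_mono (Set.subset_preimage_image φ D)
      _ = ν (φ '' D) := (hν_apply ((hDcomp.image hφ).isClosed.measurableSet)).symm
      _ ≤ μ (φ '' D) := step1 _ (hDcomp.image hφ)
      _ ≤ μ A := measure_mono hDA
  refine Measure.ext (fun A hA => le_antisymm (step2 A hA) ?_)
  have hc := step2 Aᶜ hA.compl
  rw [prob_compl_eq_one_sub hA, prob_compl_eq_one_sub hA] at hc
  rwa [ENNReal.sub_le_sub_iff_left prob_le_one ENNReal.one_ne_top] at hc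

end Uniq
section Dyn

variable {K : Type*} [TopologicalSpace K] [CompactSpace K] [T2Space K]

lemma norm_attained [Nonempty K] (f : C(K, ℂ)) : ∃ k, ‖f k‖ = ‖f‖ := by
  obtain ⟨k, -, hk⟩ := isCompact_univ.exists_isMaxOn Set.univ_nonempty
    (continuous_norm.comp f.continuous).continuousOn
  refine ⟨k, le_antisymm (f.norm_coe_le_norm k) ?_⟩
  exact (ContinuousMap.norm_le f (norm_nonneg _)).2 (fun x => hk (Set.mem_univ x))

end Dyn
end Stmt7Aux

set_option maxHeartbeats 2000000 in
open Stmt7Aux in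
/-- For a weighted composition operator `T = w·T_φ` on `C(K)` with
nowhere-vanishing weight `w`, every `λ` in the approximate point spectrum of `T`
satisfies `|λ| ≥ ρ_min(T) = inf over φ-invariant regular Borel probability measures μ
of exp(∫ log|w| dμ)`; consequently for `|λ| < ρ_min(T)` the operator `λI − T`
is bounded below. -/
theorem stmt7 {K : Type*} [TopologicalSpace K] [CompactSpace K] [T2Space K]
    [MeasurableSpace K] [BorelSpace K]
    (φ : K → K) (hφc : Continuous φ) (hφs : Function.Surjective φ)
    (w : C(K, ℂ)) (hw : ∀ k, w k ≠ 0)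
    (T : C(K, ℂ) →L[ℂ] C(K, ℂ)) (hT : ∀ (f : C(K, ℂ)) (k : K), T f k = w k * f (φ k)) :
    (∀ lam : ℂ,
      (∃ fs : ℕ → C(K, ℂ), (∀ n, ‖fs n‖ = 1) ∧
        Tendsto (fun n => ‖T (fs n) - lam • fs n‖) atTop (nhds 0)) →
      sInf {r : ℝ | ∃ μ : Measure K, IsProbabilityMeasure μ ∧ μ.Regular ∧
          Measure.map φ μ = μ ∧
          r = Real.exp (∫ k, Real.log (‖w k‖) ∂μ)} ≤ ‖lam‖) ∧
    (∀ lam : ℂ,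
      ‖lam‖ < sInf {r : ℝ | ∃ μ : Measure K, IsProbabilityMeasure μ ∧
          μ.Regular ∧ Measure.map φ μ = μ ∧
          r = Real.exp (∫ k, Real.log (‖w k‖) ∂μ)} →
      ∃ c : ℝ, 0 < c ∧ ∀ f : C(K, ℂ), c * ‖f‖ ≤ ‖T f - lam • f‖) := by
  classical
  have part1 : ∀ lam : ℂ,
      (∃ fs : ℕ → C(K, ℂ), (∀ n, ‖fs n‖ = 1) ∧
        Tendsto (fun n => ‖T (fs n) - lam • fs n‖) atTop (nhds 0)) →
      sInf {r : ℝ | ∃ μ : Measure K, IsProbabilityMeasure μ ∧ μ.Regular ∧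
          Measure.map φ μ = μ ∧
          r = Real.exp (∫ k, Real.log (‖w k‖) ∂μ)} ≤ ‖lam‖ := by
    rintro lam ⟨fs, hfs1, hfsT⟩
    haveI hKne : Nonempty K := by
      by_contra hempty
      rw [not_nonempty_iff] at hempty
      have h0 : fs 0 = 0 := by ext x; exact (hempty.false x).elim
      have h1 := hfs1 0
      rw [h0, norm_zero] at h1
      exact one_ne_zero h1.symm
    -- cocycle weights
    set W : ℕ → K → ℂ := fun n x => ∏ j ∈ Finset.range n, w (φ^[j] x) with hWdef
    have hWne : ∀ n x, W n x ≠ 0 := fun n x =>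
      Finset.prod_ne_zero_iff.2 (fun j _ => hw _)
    have hTiter : ∀ n (f : C(K, ℂ)) (x : K), ((T ^ n) f) x = W n x * f (φ^[n] x) := by
      intro n
      induction n with
      | zero => intro f x; simp [hWdef]
      | succ n ih =>
        intro f x
        rw [pow_succ, ContinuousLinearMap.mul_apply, ih (T f) x, hT f (φ^[n] x),
          Function.iterate_succ_apply' φ n x, hWdef]
        simp only
        rw [Finset.prod_range_succ]
        ring
    -- iterated defect estimate
    set M : ℝ := max ‖T‖ (‖lam‖) with hMdef
    have hM0 : (0:ℝ) ≤ M := le_max_iff.2 (Or.inl (norm_nonneg _))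
    have hMT : ‖T‖ ≤ M := le_max_left _ _
    have hMl : ‖lam‖ ≤ M := le_max_right _ _
    have hDn : ∀ (f : C(K, ℂ)) (n : ℕ), ‖(T ^ n) f - lam ^ n • f‖ ≤
        (n : ℝ) * (M + 1) ^ n * ‖T f - lam • f‖ := by
      intro f n
      induction n with
      | zero => simp
      | succ n ih =>
        have key : (T ^ (n+1)) f - lam ^ (n+1) • f
            = T ((T ^ n) f - lam ^ n • f) + lam ^ n • (T f - lam • f) := by
          rw [pow_succ', ContinuousLinearMap.mul_apply, T.map_sub, T.map_smul, smul_sub,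
            smul_smul, ← pow_succ]
          abel
        have b1 : ‖T ((T ^ n) f - lam ^ n • f)‖ ≤ M * ((n : ℝ) * (M + 1) ^ n * ‖T f - lam • f‖) := by
          refine (T.le_opNorm _).trans ?_
          have h0 : (0:ℝ) ≤ (n : ℝ) * (M + 1) ^ n * ‖T f - lam • f‖ := by positivity
          exact mul_le_mul hMT ih (norm_nonneg _) hM0
        have b2 : ‖lam ^ n • (T f - lam • f)‖ ≤ M ^ n * ‖T f - lam • f‖ := by
          rw [norm_smul, norm_pow]
          exact mul_le_mul_of_nonneg_right (pow_le_pow_left₀ (norm_nonneg _) hMl n)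
            (norm_nonneg _)
        have hMn : M ^ n ≤ (M + 1) ^ n := pow_le_pow_left₀ hM0 (by linarith) n
        have hMn1 : (M + 1) ^ n ≤ (M + 1) ^ (n+1) :=
          pow_le_pow_right₀ (by linarith) (Nat.le_succ n)
        have hr : (0:ℝ) ≤ ‖T f - lam • f‖ := norm_nonneg _
        have hp0 : (0:ℝ) ≤ (M + 1) ^ n := by positivity
        calc ‖(T ^ (n+1)) f - lam ^ (n+1) • f‖
            ≤ ‖T ((T ^ n) f - lam ^ n • f)‖ + ‖lam ^ n • (T f - lam • f)‖ := by
              rw [key]; exact norm_add_le _ _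
          _ ≤ M * ((n : ℝ) * (M + 1) ^ n * ‖T f - lam • f‖) + M ^ n * ‖T f - lam • f‖ :=
              add_le_add b1 b2
          _ ≤ ((n+1 : ℕ) : ℝ) * (M + 1) ^ (n+1) * ‖T f - lam • f‖ := by
              push_cast
              have e1 : M * ((n : ℝ) * (M + 1) ^ n * ‖T f - lam • f‖)
                  ≤ (M + 1) * ((n : ℝ) * (M + 1) ^ n * ‖T f - lam • f‖) := by
                refine mul_le_mul_of_nonneg_right (by linarith) ?_
                positivity
              have e2 : M ^ n * ‖T f - lam • f‖ ≤ (M + 1) ^ (n+1) * ‖T f - lam • f‖ :=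
                mul_le_mul_of_nonneg_right (hMn.trans hMn1) hr
              have e3 : (M + 1) * ((n : ℝ) * (M + 1) ^ n * ‖T f - lam • f‖)
                  = (n : ℝ) * (M + 1) ^ (n+1) * ‖T f - lam • f‖ := by ring
              rw [e3] at e1
              nlinarith [e1, e2]
    rcases eq_or_ne lam 0 with rfl | hlam0
    · -- lam = 0 : impossible, T is bounded below
      exfalso
      obtain ⟨x₀, -, hx₀⟩ := isCompact_univ.exists_isMinOn Set.univ_nonempty
        (continuous_norm.comp w.continuous).continuousOn
      set c : ℝ := ‖w x₀‖ with hcdef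
      have hc : 0 < c := norm_pos_iff.2 (hw x₀)
      have hlow : ∀ f : C(K, ℂ), c * ‖f‖ ≤ ‖T f‖ := by
        intro f
        have hky : ∀ k : K, ‖f k‖ ≤ c⁻¹ * ‖T f‖ := by
          intro k
          obtain ⟨x, rfl⟩ := hφs k
          have h1 : c * ‖f (φ x)‖ ≤ ‖w x‖ * ‖f (φ x)‖ :=
            mul_le_mul_of_nonneg_right (hx₀ (Set.mem_univ x)) (norm_nonneg _)
          have h2 : ‖w x * f (φ x)‖ ≤ ‖T f‖ := by
            rw [← hT f x]
            exact (T f).norm_coe_le_norm x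
          rw [norm_mul] at h2
          rw [le_inv_mul_iff₀ hc]
          exact h1.trans h2
        have h5 := (ContinuousMap.norm_le f (by positivity)).2 hky
        rwa [le_inv_mul_iff₀ hc] at h5
      have h0 : Tendsto (fun n => ‖T (fs n)‖) atTop (nhds 0) := by
        refine hfsT.congr (fun n => ?_)
        rw [zero_smul, sub_zero]
      have : c ≤ 0 := by
        refine ge_of_tendsto h0 (Eventually.of_forall (fun n => ?_))
        have := hlow (fs n)
        rwa [hfs1 n, mul_one] at this
      linarith
    · -- main case
      have habs : 0 < ‖lam‖ := norm_pos_iff.2 hlam0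
      -- select points along backward orbits
      have hxs : ∀ n : ℕ, ∃ x : K,
          ‖W (n+1) x‖ ≤ 2 * ‖lam‖ ^ (n+1) := by
        intro n
        set Cn : ℝ := ((n+1 : ℕ) : ℝ) * (M + 1) ^ (n+1) with hCndef
        have hCnpos : 0 < Cn := by positivity
        have hev : ∀ᶠ m in atTop,
            ‖T (fs m) - lam • fs m‖ < ‖lam‖ ^ (n+1) / Cn :=
          hfsT.eventually_lt_const (by positivity)
        obtain ⟨m, hm⟩ := hev.exists
        obtain ⟨k0, hk0⟩ := norm_attained (fs m)
        rw [hfs1 m] at hk0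
        obtain ⟨x, hx⟩ := (hφs.iterate (n+1)) k0
        refine ⟨x, ?_⟩
        have hptw : ‖((T ^ (n+1)) (fs m) - lam ^ (n+1) • fs m) x‖
            ≤ Cn * ‖T (fs m) - lam • fs m‖ :=
          (ContinuousMap.norm_coe_le_norm _ x).trans (hDn (fs m) (n+1))
        have heval : ((T ^ (n+1)) (fs m) - lam ^ (n+1) • fs m) x
            = W (n+1) x * fs m k0 - lam ^ (n+1) * fs m x := by
          rw [ContinuousMap.sub_apply, ContinuousMap.smul_apply, hTiter (n+1) (fs m) x, hx,
            smul_eq_mul]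
        have hfx1 : ‖fs m x‖ ≤ 1 := by
          have := (fs m).norm_coe_le_norm x
          rwa [hfs1 m] at this
        have hrCn : Cn * ‖T (fs m) - lam • fs m‖ ≤ ‖lam‖ ^ (n+1) := by
          rw [lt_div_iff₀ hCnpos] at hm
          linarith [hm]
        calc ‖W (n+1) x‖
            = ‖W (n+1) x * fs m k0‖ := by rw [norm_mul, hk0, mul_one]
          _ ≤ ‖W (n+1) x * fs m k0 - lam ^ (n+1) * fs m x‖ + ‖lam ^ (n+1) * fs m x‖ := by
              have e : W (n+1) x * fs m k0
                  = (W (n+1) x * fs m k0 - lam ^ (n+1) * fs m x) + lam ^ (n+1) * fs m x := by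
                ring
              conv_lhs => rw [e]
              exact norm_add_le _ _
          _ ≤ Cn * ‖T (fs m) - lam • fs m‖ + ‖lam‖ ^ (n+1) * 1 := by
              refine add_le_add (heval ▸ hptw) ?_
              rw [norm_mul, norm_pow]
              exact mul_le_mul_of_nonneg_left hfx1 (by positivity)
          _ ≤ ‖lam‖ ^ (n+1) + ‖lam‖ ^ (n+1) := by
              rw [mul_one]
              exact add_le_add hrCn le_rfl
          _ = 2 * ‖lam‖ ^ (n+1) := by ring
      choose xs hxsle using hxs
      -- the weight observable
      have hgcont : Continuous (fun x : K => Real.log (‖w x‖)) := by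
        refine continuous_iff_continuousAt.2 (fun x => ?_)
        refine (Real.continuousAt_log ?_).comp (continuous_norm.comp w.continuous).continuousAt
        exact norm_ne_zero_iff.2 (hw x)
      set g : C(K, ℝ) := ⟨fun x => Real.log (‖w x‖), hgcont⟩ with hgdef
      have hgW : ∀ n x, ∑ j ∈ Finset.range n, g (φ^[j] x)
          = Real.log (‖W n x‖) := by
        intro n x
        rw [hWdef]
        simp only
        rw [norm_prod, Real.log_prod (fun j _ => norm_ne_zero_iff.2 (hw _))]
        exact Finset.sum_congr rfl (fun j _ => rfl)
      -- averages
      set A : C(K, ℝ) → ℕ → ℝ :=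
        fun f n => ((n+1 : ℕ) : ℝ)⁻¹ * ∑ j ∈ Finset.range (n+1), f (φ^[j] (xs n)) with hAdef
      have hnpos : ∀ n : ℕ, (0:ℝ) < ((n+1 : ℕ) : ℝ) := fun n => by positivity
      have hAbd : ∀ (f : C(K, ℝ)) (n : ℕ), |A f n| ≤ ‖f‖ := by
        intro f n
        rw [hAdef]
        simp only
        rw [abs_mul, abs_inv, Nat.abs_cast]
        have h1 : |∑ j ∈ Finset.range (n+1), f (φ^[j] (xs n))| ≤ ((n+1 : ℕ) : ℝ) * ‖f‖ := by
          refine (Finset.abs_sum_le_sum_abs _ _).trans ?_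
          have h2 : ∀ j ∈ Finset.range (n+1), |f (φ^[j] (xs n))| ≤ ‖f‖ := fun j _ => by
            have := f.norm_coe_le_norm (φ^[j] (xs n))
            rwa [Real.norm_eq_abs] at this
          calc ∑ j ∈ Finset.range (n+1), |f (φ^[j] (xs n))|
              ≤ ∑ _j ∈ Finset.range (n+1), ‖f‖ := Finset.sum_le_sum h2
            _ = ((n+1 : ℕ) : ℝ) * ‖f‖ := by
                rw [Finset.sum_const, Finset.card_range, nsmul_eq_mul]
        calc ((n+1 : ℕ) : ℝ)⁻¹ * |∑ j ∈ Finset.range (n+1), f (φ^[j] (xs n))|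
            ≤ ((n+1 : ℕ) : ℝ)⁻¹ * (((n+1 : ℕ) : ℝ) * ‖f‖) :=
              mul_le_mul_of_nonneg_left h1 (by positivity)
          _ = ‖f‖ := by field_simp
      set U : Ultrafilter ℕ := Ultrafilter.of atTop with hUdef
      have hUle : (U : Filter ℕ) ≤ atTop := Ultrafilter.of_le atTop
      have hconv : ∀ f : C(K, ℝ), ∃ l, Tendsto (A f) (U : Filter ℕ) (nhds l) := by
        intro f
        have hmem : ∀ n, A f n ∈ Set.Icc (-‖f‖) ‖f‖ := fun n => by
          have := abs_le.1 (hAbd f n)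
          exact ⟨this.1, this.2⟩
        have hle : (U.map (A f) : Filter ℝ) ≤ Filter.principal (Set.Icc (-‖f‖) ‖f‖) := by
          rw [le_principal_iff]
          exact Filter.mem_map.2 (Filter.univ_mem' hmem)
        obtain ⟨l, -, hl⟩ := (isCompact_Icc (a := -‖f‖) (b := ‖f‖)).ultrafilter_le_nhds
          (U.map (A f)) hle
        exact ⟨l, hl⟩
      choose L0 hL0 using hconv
      have hadd : ∀ f₁ f₂ : C(K, ℝ), L0 (f₁ + f₂) = L0 f₁ + L0 f₂ := by
        intro f₁ f₂
        refine tendsto_nhds_unique (hL0 (f₁ + f₂)) ?_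
        refine ((hL0 f₁).add (hL0 f₂)).congr (fun n => ?_)
        rw [hAdef]
        simp only [ContinuousMap.add_apply]
        rw [← mul_add, ← Finset.sum_add_distrib]
      have hsmul : ∀ (c : ℝ) (f : C(K, ℝ)), L0 (c • f) = c * L0 f := by
        intro c f
        refine tendsto_nhds_unique (hL0 (c • f)) ?_
        refine ((hL0 f).const_mul c).congr (fun n => ?_)
        rw [hAdef]
        simp only [ContinuousMap.smul_apply, smul_eq_mul]
        rw [← Finset.mul_sum]
        ring
      set L : C(K, ℝ) →ₗ[ℝ] ℝ :=
        { toFun := L0, map_add' := hadd, map_smul' := hsmul } with hLdef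
      have hLapp : ∀ f, L f = L0 f := fun f => rfl
      have hLpos : ∀ f : C(K, ℝ), (∀ x, 0 ≤ f x) → 0 ≤ L f := by
        intro f hf
        rw [hLapp]
        refine ge_of_tendsto (hL0 f) (Eventually.of_forall (fun n => ?_))
        rw [hAdef]
        simp only
        have : 0 ≤ ∑ j ∈ Finset.range (n+1), f (φ^[j] (xs n)) :=
          Finset.sum_nonneg (fun j _ => hf _)
        positivity
      have hLone : L 1 = 1 := by
        rw [hLapp]
        refine tendsto_nhds_unique (hL0 1) ?_
        have : ∀ n, A 1 n = 1 := by
          intro n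
          rw [hAdef]
          simp only [ContinuousMap.one_apply]
          rw [Finset.sum_const, Finset.card_range, nsmul_eq_mul, mul_one]
          exact inv_mul_cancel₀ (hnpos n).ne'
        exact Tendsto.congr (fun n => (this n).symm) tendsto_const_nhds
      have hLg : L g ≤ Real.log (‖lam‖) := by
        rw [hLapp]
        have hb : ∀ n, A g n ≤ Real.log (‖lam‖)
            + Real.log 2 * ((n+1 : ℕ) : ℝ)⁻¹ := by
          intro n
          have h1 : A g n = ((n+1 : ℕ) : ℝ)⁻¹ * Real.log (‖W (n+1) (xs n)‖) := by
            rw [hAdef]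
            simp only
            rw [hgW]
          have h2 : Real.log (‖W (n+1) (xs n)‖)
              ≤ Real.log 2 + ((n+1 : ℕ) : ℝ) * Real.log (‖lam‖) := by
            have h2' := Real.log_le_log (norm_pos_iff.2 (hWne (n+1) (xs n))) (hxsle n)
            rw [Real.log_mul two_ne_zero (pow_ne_zero _ habs.ne'), Real.log_pow] at h2'
            push_cast
            push_cast at h2'
            linarith
          rw [h1]
          have h3 := mul_le_mul_of_nonneg_left h2 (inv_nonneg.2 (hnpos n).le)
          refine h3.trans (le_of_eq ?_)
          have hne : ((n+1:ℕ):ℝ) ≠ 0 := (hnpos n).ne'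
          rw [mul_add, inv_mul_cancel_left₀ hne]
          ring
        have hblim : Tendsto (fun n => Real.log (‖lam‖)
            + Real.log 2 * ((n+1 : ℕ) : ℝ)⁻¹) atTop (nhds (Real.log (‖lam‖))) := by
          have h4 : Tendsto (fun n : ℕ => ((n+1 : ℕ) : ℝ)⁻¹) atTop (nhds 0) := by
            simpa [one_div] using tendsto_one_div_add_atTop_nhds_zero_nat (𝕜 := ℝ)
          have := (h4.const_mul (Real.log 2)).const_add (Real.log (‖lam‖))
          simpa using this
        exact le_of_tendsto_of_tendsto' (hL0 g) (hblim.mono_left hUle) hb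
      have hLφ : ∀ f : C(K, ℝ), L (f.comp ⟨φ, hφc⟩) = L f := by
        intro f
        rw [hLapp, hLapp]
        refine tendsto_nhds_unique (hL0 (f.comp ⟨φ, hφc⟩)) ?_
        have hdiff : ∀ n, A (f.comp ⟨φ, hφc⟩) n - A f n
            = ((n+1 : ℕ) : ℝ)⁻¹ * (f (φ^[n+1] (xs n)) - f (xs n)) := by
          intro n
          rw [hAdef]
          simp only [ContinuousMap.comp_apply, ContinuousMap.coe_mk]
          rw [← mul_sub]
          congr 1
          have hshift : ∀ j, f (φ (φ^[j] (xs n))) = f (φ^[j+1] (xs n)) := fun j => by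
            rw [Function.iterate_succ_apply' φ j (xs n)]
          rw [Finset.sum_congr rfl (fun j _ => hshift j)]
          have e1 : ∑ j ∈ Finset.range (n+2), f (φ^[j] (xs n))
              = ∑ j ∈ Finset.range (n+1), f (φ^[j+1] (xs n)) + f (φ^[0] (xs n)) :=
            Finset.sum_range_succ' _ (n+1)
          have e2 : ∑ j ∈ Finset.range (n+2), f (φ^[j] (xs n))
              = ∑ j ∈ Finset.range (n+1), f (φ^[j] (xs n)) + f (φ^[n+1] (xs n)) :=
            Finset.sum_range_succ _ (n+1)
          have := e1.symm.trans e2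
          simp only [Function.iterate_zero_apply] at this
          linarith
        have hzero : Tendsto (fun n => A (f.comp ⟨φ, hφc⟩) n - A f n) (U : Filter ℕ) (nhds 0) := by
          refine squeeze_zero_norm (a := fun n => 2 * ‖f‖ * ((n+1 : ℕ) : ℝ)⁻¹) (fun n => ?_) ?_
          · rw [hdiff n]
            rw [Real.norm_eq_abs, abs_mul, abs_inv, Nat.abs_cast]
            show ((n+1 : ℕ) : ℝ)⁻¹ * |f (φ^[n+1] (xs n)) - f (xs n)|
              ≤ 2 * ‖f‖ * ((n+1 : ℕ) : ℝ)⁻¹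
            rw [mul_comm (2 * ‖f‖) _]
            refine mul_le_mul_of_nonneg_left ?_ (by positivity)
            have ha := f.norm_coe_le_norm (φ^[n+1] (xs n))
            have hb := f.norm_coe_le_norm (xs n)
            rw [Real.norm_eq_abs] at ha hb
            calc |f (φ^[n+1] (xs n)) - f (xs n)|
                ≤ |f (φ^[n+1] (xs n))| + |f (xs n)| := abs_sub _ _
              _ ≤ 2 * ‖f‖ := by linarith
          · have h4 : Tendsto (fun n : ℕ => ((n+1 : ℕ) : ℝ)⁻¹) atTop (nhds 0) := by
              simpa [one_div] using tendsto_one_div_add_atTop_nhds_zero_nat (𝕜 := ℝ)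
            have := (h4.const_mul (2 * ‖f‖)).mono_left hUle
            simpa using this
        have := (hL0 f).add hzero
        rw [add_zero] at this
        refine this.congr (fun n => ?_)
        ring
      -- build the invariant measure
      set μ : Measure K := rieszMeasure (L := L) hLpos with hμdef
      haveI hprob : IsProbabilityMeasure μ := rieszMeasure_prob hLpos hLone
      have hreg : μ.Regular := rieszMeasure_regular hLpos
      have hrep : ∀ f : C(K, ℝ), ∫ x, f x ∂μ = L f := integral_rieszMeasure hLpos hLone
      have hinv : Measure.map φ μ = μ := by
        refine map_eq_of_integral_eq μ hreg φ hφc (fun f => ?_)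
        have h1 : ∫ x, f (φ x) ∂μ = ∫ x, (f.comp ⟨φ, hφc⟩) x ∂μ := rfl
        rw [h1, hrep (f.comp ⟨φ, hφc⟩), hrep f]
        exact hLφ f
      have hintg : ∫ k, Real.log (‖w k‖) ∂μ = L g := hrep g
      have hmem : Real.exp (∫ k, Real.log (‖w k‖) ∂μ) ∈
          {r : ℝ | ∃ μ' : Measure K, IsProbabilityMeasure μ' ∧ μ'.Regular ∧
            Measure.map φ μ' = μ' ∧
            r = Real.exp (∫ k, Real.log (‖w k‖) ∂μ')} :=
        ⟨μ, hprob, hreg, hinv, rfl⟩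
      have hbdd : BddBelow {r : ℝ | ∃ μ' : Measure K, IsProbabilityMeasure μ' ∧ μ'.Regular ∧
          Measure.map φ μ' = μ' ∧
          r = Real.exp (∫ k, Real.log (‖w k‖) ∂μ')} := by
        refine ⟨0, ?_⟩
        rintro r ⟨μ', h1, h2, h3, rfl⟩
        exact (Real.exp_pos _).le
      refine (csInf_le hbdd hmem).trans ?_
      rw [hintg]
      calc Real.exp (L g) ≤ Real.exp (Real.log (‖lam‖)) := Real.exp_le_exp.2 hLg
        _ = ‖lam‖ := Real.exp_log habs
  refine ⟨part1, ?_⟩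
  intro lam hlt
  by_contra hnc
  push_neg at hnc
  have hex : ∀ n : ℕ, ∃ f : C(K, ℂ), ‖T f - lam • f‖ < ((n+1 : ℕ) : ℝ)⁻¹ * ‖f‖ :=
    fun n => hnc (((n+1 : ℕ) : ℝ)⁻¹) (by positivity)
  choose f0 hf0 using hex
  have hfne : ∀ n, (0:ℝ) < ‖f0 n‖ := by
    intro n
    rcases (norm_nonneg (f0 n)).lt_or_eq with h | h
    · exact h
    · exfalso
      have := hf0 n
      rw [← h, mul_zero] at this
      exact absurd this (not_lt.2 (norm_nonneg _))
  set gs : ℕ → C(K, ℂ) := fun n => ((‖f0 n‖ : ℂ))⁻¹ • f0 n with hgsdef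
  have hgs1 : ∀ n, ‖gs n‖ = 1 := by
    intro n
    rw [hgsdef]
    simp only [norm_smul, norm_inv, Complex.norm_real, Real.norm_eq_abs,
      abs_of_pos (hfne n)]
    exact inv_mul_cancel₀ (hfne n).ne'
  have hgsT : Tendsto (fun n => ‖T (gs n) - lam • gs n‖) atTop (nhds 0) := by
    have hcomp : ∀ n, ‖T (gs n) - lam • gs n‖ = ‖f0 n‖⁻¹ * ‖T (f0 n) - lam • f0 n‖ := by
      intro n
      have h1 : T (gs n) - lam • gs n = ((‖f0 n‖ : ℂ))⁻¹ • (T (f0 n) - lam • f0 n) := by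
        rw [hgsdef]
        simp only
        rw [T.map_smul, smul_comm lam ((‖f0 n‖ : ℂ))⁻¹ (f0 n), smul_sub]
      rw [h1, norm_smul, norm_inv, Complex.norm_real, Real.norm_eq_abs, abs_of_pos (hfne n)]
    refine squeeze_zero (g := fun n => ((n+1 : ℕ) : ℝ)⁻¹) (fun n => norm_nonneg _) (fun n => ?_) ?_
    · show ‖T (gs n) - lam • gs n‖ ≤ ((n+1 : ℕ) : ℝ)⁻¹
      rw [hcomp n]
      calc ‖f0 n‖⁻¹ * ‖T (f0 n) - lam • f0 n‖
          ≤ ‖f0 n‖⁻¹ * (((n+1 : ℕ) : ℝ)⁻¹ * ‖f0 n‖) :=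
            mul_le_mul_of_nonneg_left (hf0 n).le (by positivity)
        _ = ((n+1 : ℕ) : ℝ)⁻¹ := by
            rw [mul_comm (((n+1 : ℕ) : ℝ))⁻¹ ‖f0 n‖, ← mul_assoc,
              inv_mul_cancel₀ (hfne n).ne', one_mul]
    · simpa [one_div] using tendsto_one_div_add_atTop_nhds_zero_nat (𝕜 := ℝ)
  have := part1 lam ⟨gs, hgs1, hgsT⟩
  linarith
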